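/- Let $q \ge r \ge 2$ be integers, $\alpha > 1$ and $\delta > 0$ real numbers, $Q$ an $r$-graph on $q$ vertices, $\mathcal{F}$ a family of $r$-graphs with $\hat{\pi} := \hat{\pi}(Q,\mathcal{F}) > 0$, and $\mathfrak{H}$ a hereditary family of $\mathcal{F}$-free $r$-graphs. Suppose that $\mathcal{F}$ is $(\delta, N, Q)$-smooth and $\mathfrak{H}$ is $(\alpha, \delta, N, Q, \mathcal{F})$-balanced in spectral for some integer $N$. Then there exists $N_1$ such that for every $n \ge N_1$, writing $\mu_n := \lambda_{\alpha,Q}(n,\mathfrak{H})$, one has $\big|\mu_n - \mu_{n-1} - \tfrac{q(\alpha-1)}{\alpha}\hat{\pi}\, n^{q - q/\alpha - 1}\big| \le 5\delta\, n^{q - q/\alpha - 1}$. -/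

import Mathlib

open scoped Classical
open Finset Filter Real

/-- An `r`-uniform hypergraph on vertex set `Fin n`. -/
structure RGraph (r n : ℕ) where
  edges : Finset (Finset (Fin n))
  card_eq : ∀ e ∈ edges, e.card = r

/-- The set (as a `Finset`) of injective homomorphisms from `Q` to `H`. -/
noncomputable def Inj {r a b : ℕ} (Q : RGraph r a) (H : RGraph r b) :
    Finset (Fin a → Fin b) :=
  Finset.univ.filter fun φ => Function.Injective φ ∧ ∀ e ∈ Q.edges, e.image φ ∈ H.edges

/-- The Lagrangian `Q`-polynomial of `H`. -/
noncomputable def lagPoly {r a n : ℕ} (Q : RGraph r a) (H : RGraph r n)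
    (x : Fin n → ℝ) : ℝ :=
  ∑ φ ∈ Inj Q H, ∏ i ∈ Finset.univ.image φ, x i

/-- The domain `Δ_α^{n-1} = {x : |x_1|^α + ⋯ + |x_n|^α = 1}`. -/
def simplex (α : ℝ) (n : ℕ) : Set (Fin n → ℝ) :=
  {x | ∑ i, |x i| ^ α = 1}

/-- The `(α,Q)`-spectral radius of `H`. -/
noncomputable def specRad (α : ℝ) {r a n : ℕ} (Q : RGraph r a) (H : RGraph r n) : ℝ :=
  sSup (lagPoly Q H '' simplex α n)

/-- The set of optimal vectors. -/
noncomputable def OPT (α : ℝ) {r a n : ℕ} (Q : RGraph r a) (H : RGraph r n) :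
    Set (Fin n → ℝ) :=
  {x ∈ simplex α n | lagPoly Q H x = specRad α Q H}
/-- A family of `r`-graphs: for each number of vertices, a set of `r`-graphs. -/
def Family (r : ℕ) : Type := ∀ n : ℕ, Set (RGraph r n)

/-- `H` is `F`-free: it contains no member of `F` as a subgraph. -/
def FFree {r n : ℕ} (F : Family r) (H : RGraph r n) : Prop :=
  ∀ m : ℕ, ∀ G ∈ F m, Inj G H = ∅

/-- `inj(n,Q,F)`: the maximum of `inj(Q,H)` over `F`-free `H` on `n` vertices. -/
noncomputable def injNum {r q : ℕ} (Q : RGraph r q) (F : Family r) (n : ℕ) : ℕ :=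
  sSup {k | ∃ H : RGraph r n, FFree F H ∧ k = (Inj Q H).card}

/-- `spex_α(n,Q,F)`: the maximum `(α,Q)`-spectral radius of an `F`-free `r`-graph on
`n` vertices. -/
noncomputable def spex (α : ℝ) {r q : ℕ} (Q : RGraph r q) (F : Family r) (n : ℕ) : ℝ :=
  sSup {y | ∃ H : RGraph r n, FFree F H ∧ y = specRad α Q H}

/-- A family is hereditary if it is closed under taking subgraphs (any `r`-graph which
embeds into a member is a member). -/
def Hereditary {r : ℕ} (HH : Family r) : Prop :=
  ∀ (n m : ℕ) (H : RGraph r n) (G : RGraph r m),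
    H ∈ HH n → (Inj G H).Nonempty → G ∈ HH m

/-- `λ_{α,Q}(n, 𝔥)`. -/
noncomputable def famSpec (α : ℝ) {r q : ℕ} (Q : RGraph r q) (HH : Family r) (n : ℕ) : ℝ :=
  sSup {y | ∃ H ∈ HH n, y = specRad α Q H}

/-- The `Q`-degree of a vertex. -/
noncomputable def qDeg {r q n : ℕ} (Q : RGraph r q) (H : RGraph r n) (v : Fin n) : ℕ :=
  ((Inj Q H).filter fun φ => ∃ u, φ u = v).card

/-- The minimum `Q`-degree. -/
noncomputable def minQDeg {r q n : ℕ} (Q : RGraph r q) (H : RGraph r n) : ℕ :=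
  sInf (Set.range (qDeg Q H))

/-- `F` is `(δ, N, Q)`-smooth (relative to a given value `hatpi` of `π̂(Q,F)`). -/
def SmoothFam {r q : ℕ} (Q : RGraph r q) (F : Family r) (hatpi δ : ℝ) (N : ℕ) : Prop :=
  ∀ n : ℕ, N ≤ n →
    |(injNum Q F n : ℝ) - (injNum Q F (n - 1) : ℝ) - q * hatpi * (n : ℝ) ^ (q - 1)|
      ≤ δ * (n : ℝ) ^ (q - 1)

/-- `F` is `(δ, N, Q)`-degree stable with respect to `HH`. -/
def DegStable {r q : ℕ} (Q : RGraph r q) (F HH : Family r) (hatpi δ : ℝ) (N : ℕ) : Prop :=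
  ∀ n : ℕ, N ≤ n → ∀ H : RGraph r n, FFree F H →
    (1 - δ) * q * hatpi * (n : ℝ) ^ (q - 1) ≤ (minQDeg Q H : ℝ) → H ∈ HH n

/-- `HH` is `(α, δ, N, Q, F)`-balanced in spectral. -/
def BalancedSpec (α : ℝ) {r q : ℕ} (Q : RGraph r q) (F HH : Family r) (δ : ℝ) (N : ℕ) :
    Prop :=
  ∀ n : ℕ, N ≤ n →
    |famSpec α Q HH n - (injNum Q F n : ℝ) / (n : ℝ) ^ ((q : ℝ) / α)|
      ≤ δ * (n : ℝ) ^ ((q : ℝ) - q / α - 1)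

/-- **Lemma (spectral difference):** estimate for `μ_n - μ_{n-1}` where
`μ_n = λ_{α,Q}(n, 𝔥)`. -/

lemma aux_base : Tendsto (fun n : ℕ => ((n:ℝ)-1)/(n:ℝ)) atTop (nhds 1) := by
  have h : Tendsto (fun n : ℕ => 1 / (n:ℝ)) atTop (nhds 0) := tendsto_one_div_atTop_nhds_zero_nat
  have h2 := (tendsto_const_nhds (x := (1:ℝ)) (f := atTop (α := ℕ))).sub h
  simp only [sub_zero] at h2
  refine h2.congr' ?_
  filter_upwards [eventually_ge_atTop 1] with n hn
  have hn0 : (n:ℝ) ≠ 0 := by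
    have : 0 < n := hn
    positivity
  field_simp

lemma aux_ratio (t : ℝ) :
    Tendsto (fun n : ℕ => (((n:ℝ)-1)/(n:ℝ)) ^ t) atTop (nhds 1) := by
  have := aux_base.rpow_const (p := t) (Or.inl one_ne_zero)
  simpa using this

lemma aux_slope (s : ℝ) :
    Tendsto (fun n : ℕ => (n:ℝ) * ((((n:ℝ)-1)/(n:ℝ)) ^ s - 1)) atTop (nhds (-s)) := by
  have hd : HasDerivAt (fun x : ℝ => x ^ s) s 1 := by
    simpa using Real.hasDerivAt_rpow_const (p := s) (x := 1) (Or.inl one_ne_zero)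
  have hslope := hasDerivAt_iff_tendsto_slope.mp hd
  have hx' : Tendsto (fun n : ℕ => ((n:ℝ)-1)/(n:ℝ)) atTop (nhdsWithin 1 {1}ᶜ) := by
    rw [tendsto_nhdsWithin_iff]
    refine ⟨aux_base, ?_⟩
    filter_upwards [eventually_ge_atTop 1] with n hn
    have hn0 : (0:ℝ) < n := by exact_mod_cast hn
    simp only [Set.mem_compl_iff, Set.mem_singleton_iff]
    intro h
    rw [div_eq_one_iff_eq (ne_of_gt hn0)] at h
    linarith
  have hc := hslope.comp hx'
  have hc' : Tendsto (fun n : ℕ => -((n:ℝ) * ((((n:ℝ)-1)/(n:ℝ)) ^ s - 1))) atTop (nhds s) := by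
    refine hc.congr' ?_
    filter_upwards [eventually_ge_atTop 1] with n hn
    have hn0 : (0:ℝ) < n := by exact_mod_cast hn
    have hne : (n:ℝ) ≠ 0 := ne_of_gt hn0
    simp only [Function.comp_apply, slope_def_field]
    rw [Real.one_rpow]
    have hxn : ((n:ℝ)-1)/(n:ℝ) - 1 = -(1/(n:ℝ)) := by field_simp; ring
    rw [div_eq_iff (by rw [hxn]; simp [hne])]
    rw [hxn]
    field_simp
  have := hc'.neg
  simpa using this


theorem spectral_difference {r q : ℕ} (hr : 2 ≤ r) (hrq : r ≤ q)
    {α δ : ℝ} (hα : 1 < α) (hδ : 0 < δ)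
    (Q : RGraph r q) (F HH : Family r) (hatpi : ℝ)
    (hlim : Tendsto (fun n : ℕ => (injNum Q F n : ℝ) / (n : ℝ) ^ q) atTop (nhds hatpi))
    (hpi : 0 < hatpi)
    (hfree : ∀ n : ℕ, ∀ H ∈ HH n, FFree F H)
    (hher : Hereditary HH)
    (N : ℕ) (hsm : SmoothFam Q F hatpi δ N) (hbal : BalancedSpec α Q F HH δ N) :
    ∃ N1 : ℕ, ∀ n : ℕ, N1 ≤ n →
      |famSpec α Q HH n - famSpec α Q HH (n - 1)
          - q * (α - 1) / α * hatpi * (n : ℝ) ^ ((q : ℝ) - q / α - 1)|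
        ≤ 5 * δ * (n : ℝ) ^ ((q : ℝ) - q / α - 1) := by
  have hq2 : 2 ≤ q := le_trans hr hrq
  have hα0 : (0:ℝ) < α := lt_trans one_pos hα
  set s : ℝ := (q:ℝ)/α with hs_def
  set e : ℝ := (q:ℝ) - (q:ℝ)/α - 1 with he_def
  have he : e = (q:ℝ) - 1 - s := by rw [he_def]; ring
  -- shifted limit
  have hIshift : Tendsto (fun n : ℕ => (injNum Q F (n-1) : ℝ) / ((n:ℝ)-1) ^ (q:ℕ))
      atTop (nhds hatpi) := by
    have h := hlim.comp (tendsto_sub_atTop_nat 1)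
    refine h.congr' ?_
    filter_upwards [eventually_ge_atTop 1] with n hn
    simp only [Function.comp_apply]
    rw [Nat.cast_sub hn, Nat.cast_one]
  have hprod : Tendsto (fun n : ℕ =>
      ((injNum Q F (n-1) : ℝ) / ((n:ℝ)-1) ^ (q:ℕ)) * ((((n:ℝ)-1)/(n:ℝ)) ^ ((q:ℝ) - s))
        * ((n:ℝ) * ((((n:ℝ)-1)/(n:ℝ)) ^ s - 1))) atTop (nhds (-(s * hatpi))) := by
    have h := (hIshift.mul (aux_ratio ((q:ℝ) - s))).mul (aux_slope s)
    convert h using 2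
    ring
  have hS : Tendsto (fun n : ℕ =>
      (injNum Q F (n-1) : ℝ) * ((n:ℝ) ^ (-s) - ((n:ℝ)-1) ^ (-s)) * (n:ℝ) ^ (-e))
      atTop (nhds (-(s * hatpi))) := by
    refine hprod.congr' ?_
    filter_upwards [eventually_ge_atTop 2] with n hn
    have hn0 : (0:ℝ) < n := by exact_mod_cast Nat.lt_of_lt_of_le two_pos hn
    have hn1 : (0:ℝ) < (n:ℝ) - 1 := by
      have : (2:ℝ) ≤ n := by exact_mod_cast hn
      linarith
    have hA : (0:ℝ) < (n:ℝ) ^ ((q:ℝ)) := Real.rpow_pos_of_pos hn0 _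
    have hB : (0:ℝ) < ((n:ℝ)-1) ^ ((q:ℝ)) := Real.rpow_pos_of_pos hn1 _
    have hu : (0:ℝ) < (n:ℝ) ^ s := Real.rpow_pos_of_pos hn0 _
    have hv : (0:ℝ) < ((n:ℝ)-1) ^ s := Real.rpow_pos_of_pos hn1 _
    have hne : (n:ℝ) ^ e = (n:ℝ) ^ ((q:ℝ)) / ((n:ℝ) * (n:ℝ) ^ s) := by
      rw [he, show (q:ℝ) - 1 - s = (q:ℝ) - (1 + s) by ring,
        Real.rpow_sub hn0, Real.rpow_add hn0, Real.rpow_one]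
    rw [← Real.rpow_natCast ((n:ℝ)-1) q, Real.div_rpow hn1.le hn0.le,
      Real.div_rpow hn1.le hn0.le, Real.rpow_sub hn1, Real.rpow_sub hn0,
      Real.rpow_neg hn0.le, Real.rpow_neg hn1.le, Real.rpow_neg hn0.le, hne]
    field_simp
  have h0 : Tendsto (fun n : ℕ =>
      (injNum Q F (n-1) : ℝ) * ((n:ℝ) ^ (-s) - ((n:ℝ)-1) ^ (-s)) * (n:ℝ) ^ (-e)
        + s * hatpi) atTop (nhds 0) := by
    have h := hS.add_const (s * hatpi)
    simpa using h
  have hev1 := NormedAddCommGroup.tendsto_nhds_zero.mp h0 δ hδ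
  have hev2 : ∀ᶠ n : ℕ in atTop, (((n:ℝ)-1)/(n:ℝ)) ^ e < 2 :=
    (aux_ratio e).eventually_lt_const one_lt_two
  rw [← Filter.eventually_atTop]
  filter_upwards [eventually_ge_atTop (N+2), hev1, hev2] with n hn h1 h2
  have hn2 : 2 ≤ n := by omega
  have hnN : N ≤ n := by omega
  have hnN1 : N ≤ n - 1 := by omega
  have hn0 : (0:ℝ) < n := by exact_mod_cast Nat.lt_of_lt_of_le two_pos hn2
  have hn1 : (0:ℝ) < (n:ℝ) - 1 := by
    have : (2:ℝ) ≤ n := by exact_mod_cast hn2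
    linarith
  have hb1 := hbal n hnN
  have hb2 := hbal (n-1) hnN1
  rw [Nat.cast_sub (by omega : 1 ≤ n), Nat.cast_one] at hb2
  have hsn := hsm n hnN
  set I : ℝ := (injNum Q F n : ℝ)
  set I' : ℝ := (injNum Q F (n-1) : ℝ)
  set μ : ℝ := famSpec α Q HH n
  set μ' : ℝ := famSpec α Q HH (n-1)
  set u : ℝ := (n:ℝ) ^ s with hu_def
  set v : ℝ := ((n:ℝ)-1) ^ s with hv_def
  set P : ℝ := (n:ℝ) ^ e with hP_def
  set P' : ℝ := ((n:ℝ)-1) ^ e with hP'_def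
  have hu : (0:ℝ) < u := Real.rpow_pos_of_pos hn0 _
  have hv : (0:ℝ) < v := Real.rpow_pos_of_pos hn1 _
  have hP : (0:ℝ) < P := Real.rpow_pos_of_pos hn0 _
  have hP' : (0:ℝ) < P' := Real.rpow_pos_of_pos hn1 _
  have hR : ((n:ℝ)) ^ (q-1 : ℕ) = P * u := by
    rw [← Real.rpow_natCast (n:ℝ) (q-1), Nat.cast_sub (by omega : 1 ≤ q), Nat.cast_one,
      show (q:ℝ) - 1 = e + s by rw [he]; ring, Real.rpow_add hn0, hP_def, hu_def]
  -- bound on P'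
  have hP'le : P' ≤ 2 * P := by
    have hq2' : (((n:ℝ)-1)/(n:ℝ)) ^ e = P' / P := by
      rw [Real.div_rpow hn1.le hn0.le, hP_def, hP'_def]
    have := h2.le
    rw [hq2'] at this
    rw [div_le_iff₀ hP] at this
    linarith
  -- the slope term
  have ht4 : I' * (1/u - 1/v) + s * hatpi * P
      = (I' * ((n:ℝ) ^ (-s) - ((n:ℝ)-1) ^ (-s)) * (n:ℝ) ^ (-e) + s * hatpi) * P := by
    rw [Real.rpow_neg hn0.le, Real.rpow_neg hn1.le, Real.rpow_neg hn0.le,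
      ← hu_def, ← hv_def, ← hP_def]
    field_simp
  have ht4b : |I' * (1/u - 1/v) + s * hatpi * P| ≤ δ * P := by
    rw [ht4, abs_mul, abs_of_pos hP]
    have h1' : |I' * ((n:ℝ) ^ (-s) - ((n:ℝ)-1) ^ (-s)) * (n:ℝ) ^ (-e) + s * hatpi| ≤ δ := by
      have := h1.le
      simpa [Real.norm_eq_abs] using this
    exact mul_le_mul_of_nonneg_right h1' hP.le
  -- key identity
  have hc : (q:ℝ) * (α - 1) / α * hatpi = ((q:ℝ) - s) * hatpi := by
    rw [hs_def]; field_simp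
  have key : μ - μ' - (q:ℝ) * (α - 1) / α * hatpi * P
      = (μ - I/u) + (-(μ' - I'/v)) + (I - I' - (q:ℝ) * hatpi * ((n:ℝ)) ^ (q-1 : ℕ))/u
        + (I' * (1/u - 1/v) + s * hatpi * P) := by
    rw [hc, hR]
    field_simp
    ring
  rw [key]
  have habs : |(μ - I/u) + (-(μ' - I'/v)) + (I - I' - (q:ℝ) * hatpi * ((n:ℝ)) ^ (q-1 : ℕ))/u
        + (I' * (1/u - 1/v) + s * hatpi * P)|
      ≤ |μ - I/u| + |μ' - I'/v| + |I - I' - (q:ℝ) * hatpi * ((n:ℝ)) ^ (q-1 : ℕ)|/u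
        + |I' * (1/u - 1/v) + s * hatpi * P| := by
    calc _ ≤ |(μ - I/u) + (-(μ' - I'/v)) + (I - I' - (q:ℝ) * hatpi * ((n:ℝ)) ^ (q-1 : ℕ))/u|
            + |I' * (1/u - 1/v) + s * hatpi * P| := abs_add_le _ _
      _ ≤ |(μ - I/u) + (-(μ' - I'/v))| + |(I - I' - (q:ℝ) * hatpi * ((n:ℝ)) ^ (q-1 : ℕ))/u|
            + |I' * (1/u - 1/v) + s * hatpi * P| := by
          gcongr
          exact abs_add_le _ _
      _ ≤ _ := by
          rw [abs_div, abs_of_pos hu]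
          gcongr
          calc |(μ - I/u) + (-(μ' - I'/v))| ≤ |μ - I/u| + |-(μ' - I'/v)| := abs_add_le _ _
            _ = |μ - I/u| + |μ' - I'/v| := by rw [abs_neg]
  have hb3 : |I - I' - (q:ℝ) * hatpi * ((n:ℝ)) ^ (q-1 : ℕ)|/u ≤ δ * P := by
    rw [div_le_iff₀ hu]
    calc |I - I' - (q:ℝ) * hatpi * ((n:ℝ)) ^ (q-1 : ℕ)| ≤ δ * ((n:ℝ)) ^ (q-1 : ℕ) := hsn
      _ = δ * P * u := by rw [hR]; ring
  have hb2' : |μ' - I'/v| ≤ 2 * (δ * P) := by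
    calc |μ' - I'/v| ≤ δ * P' := hb2
      _ ≤ δ * (2 * P) := by gcongr
      _ = 2 * (δ * P) := by ring
  calc _ ≤ |μ - I/u| + |μ' - I'/v| + |I - I' - (q:ℝ) * hatpi * ((n:ℝ)) ^ (q-1 : ℕ)|/u
        + |I' * (1/u - 1/v) + s * hatpi * P| := habs
    _ ≤ δ * P + 2 * (δ * P) + δ * P + δ * P :=
        add_le_add (add_le_add (add_le_add hb1 hb2') hb3) ht4b
    _ = 5 * δ * P := by ring
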